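/- For the diagonal Padé numerator p_m(x) = ∑_{j=0}^m [(2m−j)! m! / ((2m)! (m−j)! j!)] x^j, the function r_{2m}(x) = p_m(x)/p_m(−x) satisfies r_{2m}(x) − e^x = O(x^{2m+1}) as x → 0; equivalently, the first 2m+1 Taylor coefficients of p_m(x) − e^x p_m(−x) at 0 vanish. -/

import Mathlib

open Polynomial PowerSeries


lemma pade_key (m k : ℕ) (hk : k ≤ 2 * m) :
    ∑ j ∈ Finset.range (k + 1), (-1 : ℤ) ^ j * (k.choose j) * ((2 * m - j).choose m)
      = ((2 * m - k).choose m : ℤ) := by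
  have h1 : (∑ j ∈ Finset.range (k + 1),
      (-Polynomial.X : ℤ[X]) ^ j * (Polynomial.X + 1) ^ (k - j) * (k.choose j : ℤ[X])) = 1 := by
    rw [← add_pow]
    have : (-Polynomial.X + (Polynomial.X + 1) : ℤ[X]) = 1 := by ring
    rw [this, one_pow]
  have h2 : (∑ j ∈ Finset.range (k + 1),
      (-Polynomial.X : ℤ[X]) ^ j * (Polynomial.X + 1) ^ (2 * m - j) * (k.choose j : ℤ[X]))
      = (Polynomial.X + 1) ^ (2 * m - k) := by
    calc (∑ j ∈ Finset.range (k + 1),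
        (-Polynomial.X : ℤ[X]) ^ j * (Polynomial.X + 1) ^ (2 * m - j) * (k.choose j : ℤ[X]))
        = (∑ j ∈ Finset.range (k + 1),
          (-Polynomial.X : ℤ[X]) ^ j * (Polynomial.X + 1) ^ (k - j) * (k.choose j : ℤ[X])) * (Polynomial.X + 1) ^ (2 * m - k) := by
          rw [Finset.sum_mul]
          refine Finset.sum_congr rfl fun j hj => ?_
          have hj' : j ≤ k := Nat.lt_succ_iff.mp (Finset.mem_range.mp hj)
          rw [show 2 * m - j = (k - j) + (2 * m - k) by omega, pow_add]
          ring
      _ = (Polynomial.X + 1) ^ (2 * m - k) := by rw [h1, one_mul]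
  have h3 := congrArg (fun q : ℤ[X] => q.coeff m) h2
  simp only [finset_sum_coeff, coeff_X_add_one_pow] at h3
  rw [← h3]
  refine Finset.sum_congr rfl fun j hj => ?_
  have hj' : j ≤ k := Nat.lt_succ_iff.mp (Finset.mem_range.mp hj)
  have hne : (-Polynomial.X : ℤ[X]) ^ j * (Polynomial.X + 1) ^ (2 * m - j) * (k.choose j : ℤ[X])
      = ((-1 : ℤ) ^ j * k.choose j) • ((Polynomial.X + 1) ^ (2 * m - j) * Polynomial.X ^ j) := by
    rw [neg_pow]
    simp [zsmul_eq_mul]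
    ring
  rw [hne, Polynomial.coeff_smul, Polynomial.coeff_mul_X_pow', coeff_X_add_one_pow]
  by_cases hjm : j ≤ m
  · rw [if_pos hjm]
    have : (2 * m - j).choose (m - j) = (2 * m - j).choose m := by
      rw [show m - j = (2 * m - j) - m by omega, Nat.choose_symm (by omega)]
    rw [this]; simp [smul_eq_mul]
  · rw [if_neg hjm]
    have : (2 * m - j).choose m = 0 := Nat.choose_eq_zero_of_lt (by omega)
    simp [this]

lemma pade_real (m k : ℕ) (hk : k ≤ 2 * m) :
    ∑ j ∈ Finset.range (k + 1),
      (if j ≤ m then ((-1 : ℝ)) ^ j *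
        ((Nat.factorial (2 * m - j) * Nat.factorial m : ℝ) /
          (Nat.factorial (2 * m) * Nat.factorial (m - j) * Nat.factorial j)) else 0)
        * (1 / (Nat.factorial (k - j) : ℝ))
      = if k ≤ m then
          ((Nat.factorial (2 * m - k) * Nat.factorial m : ℝ) /
            (Nat.factorial (2 * m) * Nat.factorial (m - k) * Nat.factorial k)) else 0 := by
  have hfac : ∀ n : ℕ, (Nat.factorial n : ℝ) ≠ 0 :=
    fun n => Nat.cast_ne_zero.mpr (Nat.factorial_ne_zero n)
  set c : ℝ := (Nat.factorial m * Nat.factorial m : ℝ) /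
    (Nat.factorial (2 * m) * Nat.factorial k) with hc
  have hterm : ∀ j ∈ Finset.range (k + 1),
      (if j ≤ m then ((-1 : ℝ)) ^ j *
        ((Nat.factorial (2 * m - j) * Nat.factorial m : ℝ) /
          (Nat.factorial (2 * m) * Nat.factorial (m - j) * Nat.factorial j)) else 0)
        * (1 / (Nat.factorial (k - j) : ℝ))
      = c * ((-1 : ℝ) ^ j * (k.choose j) * ((2 * m - j).choose m)) := by
    intro j hj
    have hj' : j ≤ k := Nat.lt_succ_iff.mp (Finset.mem_range.mp hj)
    by_cases hjm : j ≤ m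
    · rw [if_pos hjm, Nat.cast_choose ℝ hj', Nat.cast_choose ℝ (show m ≤ 2 * m - j by omega),
        show 2 * m - j - m = m - j by omega, hc]
      field_simp
    · rw [if_neg hjm,
        show ((2 * m - j).choose m) = 0 from Nat.choose_eq_zero_of_lt (by omega)]
      simp
  rw [Finset.sum_congr rfl hterm, ← Finset.mul_sum]
  have hcast : (∑ j ∈ Finset.range (k + 1),
      ((-1 : ℝ) ^ j * (k.choose j) * ((2 * m - j).choose m)))
      = (((2 * m - k).choose m : ℤ) : ℝ) := by
    rw [← pade_key m k hk]
    push_cast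
    ring
  rw [hcast]
  by_cases hkm : k ≤ m
  · rw [if_pos hkm]
    push_cast
    rw [Nat.cast_choose ℝ (show m ≤ 2 * m - k by omega),
      show 2 * m - k - m = m - k by omega, hc]
    field_simp
  · rw [if_neg hkm,
      show ((2 * m - k).choose m) = 0 from Nat.choose_eq_zero_of_lt (by omega)]
    simp

theorem pade_order (m : ℕ) (hm : 0 < m) :
    let p : ℝ[X] := ∑ j ∈ Finset.range (m + 1),
      Polynomial.C ((Nat.factorial (2 * m - j) * Nat.factorial m : ℝ) /
        (Nat.factorial (2 * m) * Nat.factorial (m - j) * Nat.factorial j)) * Polynomial.X ^ j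
    ∀ k ≤ 2 * m,
      (PowerSeries.coeff k)
        ((p : PowerSeries ℝ) - PowerSeries.exp ℝ * ((p.comp (-Polynomial.X) : ℝ[X]) : PowerSeries ℝ)) = 0 := by
  intro p k hk
  have hp : p = ∑ j ∈ Finset.range (m + 1),
      Polynomial.C ((Nat.factorial (2 * m - j) * Nat.factorial m : ℝ) /
        (Nat.factorial (2 * m) * Nat.factorial (m - j) * Nat.factorial j)) * Polynomial.X ^ j := rfl
  set a : ℕ → ℝ := fun j => ((Nat.factorial (2 * m - j) * Nat.factorial m : ℝ) /
    (Nat.factorial (2 * m) * Nat.factorial (m - j) * Nat.factorial j)) with ha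
  have hpcoeff : ∀ n : ℕ, p.coeff n = if n ≤ m then a n else 0 := by
    intro n
    rw [hp, finset_sum_coeff]
    simp only [Polynomial.coeff_C_mul, Polynomial.coeff_X_pow, mul_ite, mul_one, mul_zero]
    rw [Finset.sum_ite_eq (Finset.range (m + 1)) n]
    simp [Nat.lt_succ_iff, ha]
  have hqc : p.comp (-Polynomial.X) = ∑ j ∈ Finset.range (m + 1),
      Polynomial.C ((-1 : ℝ) ^ j * a j) * Polynomial.X ^ j := by
    rw [hp, Polynomial.sum_comp]
    refine Finset.sum_congr rfl fun j hj => ?_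
    rw [mul_comp, C_comp, pow_comp, X_comp, neg_pow, map_mul, map_pow, map_neg, map_one]
    ring
  have hqcoeff : ∀ n : ℕ, (p.comp (-Polynomial.X)).coeff n
      = if n ≤ m then (-1 : ℝ) ^ n * a n else 0 := by
    intro n
    rw [hqc, finset_sum_coeff]
    simp only [Polynomial.coeff_C_mul, Polynomial.coeff_X_pow, mul_ite, mul_one, mul_zero]
    rw [Finset.sum_ite_eq (Finset.range (m + 1)) n]
    simp [Nat.lt_succ_iff]
  rw [map_sub, mul_comm (PowerSeries.exp ℝ), PowerSeries.coeff_mul,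
    Finset.Nat.sum_antidiagonal_eq_sum_range_succ_mk, Polynomial.coeff_coe]
  have hexp : ∀ n : ℕ, (PowerSeries.coeff n) (PowerSeries.exp ℝ)
      = 1 / (Nat.factorial n : ℝ) := by
    intro n
    simp [PowerSeries.coeff_exp, map_div₀]
  have hsum : ∑ j ∈ Finset.range (k + 1),
      (PowerSeries.coeff j) ((p.comp (-Polynomial.X) : ℝ[X]) : PowerSeries ℝ)
        * (PowerSeries.coeff (k - j)) (PowerSeries.exp ℝ)
      = ∑ j ∈ Finset.range (k + 1),
        (if j ≤ m then ((-1 : ℝ)) ^ j * a j else 0) * (1 / (Nat.factorial (k - j) : ℝ)) := by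
    refine Finset.sum_congr rfl fun j hj => ?_
    rw [Polynomial.coeff_coe, hqcoeff, hexp]
  rw [hsum, pade_real m k hk, hpcoeff]
  simp [ha]
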